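/- arXiv:2605.17111 — 2 statements merged into one kernel-verified Lean document; each statement's English description precedes it below -/
import Mathlib

section
/- Assume x_1,…,x_N are i.i.d. with mean zero, population covariance Σ, bounded fourth moments, and V_⊥ + D > 0. Define the sample analogs V̂_⊥ = (1/N²) Σ_{k=1}^N ‖P_G^⊥(x_k x_kᵀ) − P_G^⊥(R̂)‖_F² and V̂_⊥+D = ‖R̂ − R̂_G‖_F², and the plug-in α̂*_MSE = min(1, max(0, V̂_⊥/(V̂_⊥+D))). Then V̂_⊥ → V_⊥ and V̂_⊥+D → V_⊥ + D in probability as N → ∞, and consequently α̂*_MSE → α*_MSE = V_⊥/(V_⊥ + D) in probability as N → ∞. -/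
open MeasureTheory ProbabilityTheory Matrix Filter
open Topology

noncomputable section

/-- Squared Frobenius norm of a real matrix. -/
def frobSq {M : ℕ} (A : Matrix (Fin M) (Fin M) ℝ) : ℝ := ∑ i, ∑ j, (A i j) ^ 2

/-- Reynolds projection `P_G(A) = |G|⁻¹ ∑_g ρ(g) A ρ(g)ᵀ`. -/
def reynolds {M : ℕ} {G : Type*} [Fintype G] (ρ : G → Matrix (Fin M) (Fin M) ℝ)
    (A : Matrix (Fin M) (Fin M) ℝ) : Matrix (Fin M) (Fin M) ℝ :=
  (Fintype.card G : ℝ)⁻¹ • ∑ g : G, ρ g * A * (ρ g)ᵀ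

/-- Sample covariance `R̂ = N⁻¹ ∑_{n<N} xₙ xₙᵀ` built from the first `N` observations. -/
def sampleCovN {M : ℕ} {Ω : Type*} (x : ℕ → Ω → Fin M → ℝ) (N : ℕ) (ω : Ω) :
    Matrix (Fin M) (Fin M) ℝ :=
  (N : ℝ)⁻¹ • ∑ n ∈ Finset.range N, vecMulVec (x n ω) (x n ω)

section AuxLemmas
variable {M : ℕ} {G : Type*} [Fintype G] (ρ : G → Matrix (Fin M) (Fin M) ℝ)

lemma frobSq_nonneg (A : Matrix (Fin M) (Fin M) ℝ) : 0 ≤ frobSq A :=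
  Finset.sum_nonneg fun _ _ => Finset.sum_nonneg fun _ _ => sq_nonneg _

lemma frobSq_neg (A : Matrix (Fin M) (Fin M) ℝ) : frobSq (-A) = frobSq A := by
  simp [frobSq]

lemma frobSq_sub_le (A B : Matrix (Fin M) (Fin M) ℝ) :
    frobSq (A - B) ≤ 2 * frobSq A + 2 * frobSq B := by
  simp only [frobSq, Finset.mul_sum, ← Finset.sum_add_distrib]
  refine Finset.sum_le_sum fun i _ => Finset.sum_le_sum fun j _ => ?_
  simp only [Matrix.sub_apply]
  nlinarith [sq_nonneg (A i j + B i j)]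

lemma frobSq_continuous : Continuous (frobSq (M := M)) := by
  unfold frobSq
  exact continuous_finset_sum _ fun i _ => continuous_finset_sum _ fun j _ =>
    (((continuous_apply j).comp (continuous_apply i))).pow 2

lemma reynolds_continuous : Continuous (reynolds ρ) := by
  unfold reynolds
  exact (continuous_finset_sum _ fun g _ =>
    (((continuous_const : Continuous fun _ : Matrix (Fin M) (Fin M) ℝ => ρ g).matrix_mul continuous_id).matrix_mul continuous_const)).const_smul ((Fintype.card G : ℝ)⁻¹)

lemma reynolds_zero : reynolds ρ (0 : Matrix (Fin M) (Fin M) ℝ) = 0 := by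
  simp [reynolds]

lemma reynolds_smul (c : ℝ) (A : Matrix (Fin M) (Fin M) ℝ) :
    reynolds ρ (c • A) = c • reynolds ρ A := by
  simp only [reynolds, Matrix.mul_smul, Matrix.smul_mul, ← Finset.smul_sum]
  rw [smul_comm]

lemma reynolds_sub (A B : Matrix (Fin M) (Fin M) ℝ) :
    reynolds ρ (A - B) = reynolds ρ A - reynolds ρ B := by
  simp only [reynolds, Matrix.mul_sub, Matrix.sub_mul, Finset.sum_sub_distrib, smul_sub]

lemma reynolds_sum {ι : Type*} (s : Finset ι) (f : ι → Matrix (Fin M) (Fin M) ℝ) :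
    reynolds ρ (∑ i ∈ s, f i) = ∑ i ∈ s, reynolds ρ (f i) := by
  simp only [reynolds, Finset.mul_sum, Finset.sum_mul, Finset.smul_sum]
  rw [Finset.sum_comm]

lemma reynolds_entry (A : Matrix (Fin M) (Fin M) ℝ) (i j : Fin M) :
    reynolds ρ A i j =
      (Fintype.card G : ℝ)⁻¹ * ∑ g : G, ∑ b, ρ g j b * ∑ a, ρ g i a * A a b := by
  simp only [reynolds, Matrix.smul_apply, Matrix.sum_apply, Matrix.mul_apply,
    Matrix.transpose_apply, smul_eq_mul]
  congr 1
  exact Finset.sum_congr rfl fun g _ => Finset.sum_congr rfl fun b _ => mul_comm _ _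

variable {Ω : Type*} [MeasurableSpace Ω]

lemma measurable_reynolds_entry {A : Ω → Matrix (Fin M) (Fin M) ℝ}
    (hA : ∀ a b, Measurable fun ω => A ω a b) (i j : Fin M) :
    Measurable fun ω => reynolds ρ (A ω) i j := by
  simp only [reynolds_entry]
  exact (Finset.measurable_sum _ fun g _ => Finset.measurable_sum _ fun b _ =>
    (Finset.measurable_sum _ fun a _ => (hA a b).const_mul _).const_mul _).const_mul _

lemma measurable_frobSq_entry {A : Ω → Matrix (Fin M) (Fin M) ℝ}
    (hA : ∀ a b, Measurable fun ω => A ω a b) :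
    Measurable fun ω => frobSq (A ω) := by
  unfold frobSq
  exact Finset.measurable_sum _ fun i _ => Finset.measurable_sum _ fun j _ =>
    (hA i j).pow_const 2

variable {μ : Measure Ω}

lemma memLp_reynolds_entry {A : Ω → Matrix (Fin M) (Fin M) ℝ} {p : ENNReal}
    (hA : ∀ a b, MemLp (fun ω => A ω a b) p μ) (i j : Fin M) :
    MemLp (fun ω => reynolds ρ (A ω) i j) p μ := by
  simp only [reynolds_entry]
  exact (memLp_finset_sum _ fun g _ => memLp_finset_sum _ fun b _ =>
    ((memLp_finset_sum _ fun a _ => (hA a b).const_mul _).const_mul _)).const_mul _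

lemma integral_reynolds_entry {A : Ω → Matrix (Fin M) (Fin M) ℝ}
    (hA : ∀ a b, Integrable (fun ω => A ω a b) μ) (i j : Fin M) :
    ∫ ω, reynolds ρ (A ω) i j ∂μ = reynolds ρ (Matrix.of fun a b => ∫ ω, A ω a b ∂μ) i j := by
  simp only [reynolds_entry]
  rw [integral_const_mul]
  congr 1
  rw [integral_finset_sum _ fun g _ => integrable_finset_sum _ fun b _ =>
    ((integrable_finset_sum _ fun a _ => (hA a b).const_mul _).const_mul _)]
  refine Finset.sum_congr rfl fun g _ => ?_
  rw [integral_finset_sum _ fun b _ =>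
    ((integrable_finset_sum _ fun a _ => (hA a b).const_mul _).const_mul _)]
  refine Finset.sum_congr rfl fun b _ => ?_
  rw [integral_const_mul, integral_finset_sum _ fun a _ => (hA a b).const_mul _]
  simp_rw [integral_const_mul, Matrix.of_apply]

end AuxLemmas

/-- **Consistency of the closed-form MSE plug-in.**
For i.i.d. mean-zero observations with population covariance `Sg`, bounded fourth moments and
`V_⊥ + D > 0`, the sample analogs
`V̂_⊥ = N⁻² ∑_k ‖P_G^⊥(x_k x_kᵀ) − P_G^⊥(R̂)‖_F²` and `V̂_⊥+D = ‖R̂ − R̂_G‖_F²`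
converge in probability to `V_⊥` and `V_⊥ + D`, and consequently the plug-in
`α̂*_MSE = min(1, max(0, V̂_⊥/(V̂_⊥+D)))` converges in probability to
`α*_MSE = V_⊥/(V_⊥+D)` as `N → ∞`. -/
theorem mse_plugin_consistency
    {M : ℕ} {G : Type*} [Group G] [Fintype G]
    (ρ : G → Matrix (Fin M) (Fin M) ℝ)
    (hρ1 : ρ 1 = 1) (hρmul : ∀ g h : G, ρ (g * h) = ρ g * ρ h)
    (hρorth : ∀ g : G, ρ g * (ρ g)ᵀ = 1)
    {Ω : Type*} [MeasurableSpace Ω] (μ : Measure Ω) [IsProbabilityMeasure μ]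
    (x : ℕ → Ω → Fin M → ℝ)
    (Sg : Matrix (Fin M) (Fin M) ℝ)
    (hmeas : ∀ n i, Measurable fun ω => x n ω i)
    (hindep : iIndepFun x μ)
    (hident : ∀ n m : ℕ, IdentDistrib (x n) (x m) μ μ)
    (hmean : ∀ n i, ∫ ω, x n ω i ∂μ = 0)
    (hcov : ∀ n i j, ∫ ω, x n ω i * x n ω j ∂μ = Sg i j)
    (h4 : ∀ n i, MemLp (fun ω => x n ω i) 4 μ)
    (B : Matrix (Fin M) (Fin M) ℝ) (hB : B = Sg - reynolds ρ Sg)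
    (D : ℝ) (hD : D = frobSq B)
    (Vperp : ℕ → ℝ)
    (hVperp : ∀ N, Vperp N = ∫ ω,
      frobSq ((sampleCovN x N ω - Sg) - reynolds ρ (sampleCovN x N ω - Sg)) ∂μ)
    (hpos : ∀ N, 0 < Vperp N + D)
    (Vhat : ℕ → Ω → ℝ)
    (hVhat : ∀ N ω, Vhat N ω = ((N : ℝ) ^ 2)⁻¹ * ∑ k ∈ Finset.range N,
      frobSq ((vecMulVec (x k ω) (x k ω) - reynolds ρ (vecMulVec (x k ω) (x k ω)))
        - (sampleCovN x N ω - reynolds ρ (sampleCovN x N ω))))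
    (VDhat : ℕ → Ω → ℝ)
    (hVDhat : ∀ N ω, VDhat N ω = frobSq (sampleCovN x N ω - reynolds ρ (sampleCovN x N ω)))
    (αhat : ℕ → Ω → ℝ)
    (hαhat : ∀ N ω, αhat N ω = min 1 (max 0 (Vhat N ω / VDhat N ω))) :
    TendstoInMeasure μ (fun N ω => Vhat N ω - Vperp N) atTop (fun _ => 0) ∧
    TendstoInMeasure μ (fun N ω => VDhat N ω - (Vperp N + D)) atTop (fun _ => 0) ∧
    TendstoInMeasure μ (fun N ω => αhat N ω - Vperp N / (Vperp N + D)) atTop (fun _ => 0) := by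

  classical
  -- basic integrability
  have hx2 : ∀ n (a b : Fin M), MemLp (fun ω => x n ω a * x n ω b) 2 μ := by
    intro n a b
    have h := (h4 n b).smul (h4 n a) (p := 4) (q := 4) (r := 2) (hpqr := ⟨by
      rw [show (4:ENNReal) = 2*2 by norm_num, ENNReal.mul_inv (by simp) (by simp), ← mul_add,
        ENNReal.inv_two_add_inv_two, mul_one]⟩)
    simpa [Pi.smul_apply, smul_eq_mul, Pi.mul_def] using h
  have hx2int : ∀ n (a b : Fin M), Integrable (fun ω => x n ω a * x n ω b) μ :=
    fun n a b => (hx2 n a b).integrable one_le_two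
  -- entries of vecMulVec - Sg : MemLp 2 / Integrable / mean zero
  have hentmem : ∀ n (a b : Fin M),
      MemLp (fun ω => (vecMulVec (x n ω) (x n ω) - Sg) a b) 2 μ := by
    intro n a b
    simpa [Matrix.sub_apply, vecMulVec_apply, Pi.sub_def] using (hx2 n a b).sub (memLp_const (Sg a b))
  have hentint : ∀ n (a b : Fin M),
      Integrable (fun ω => (vecMulVec (x n ω) (x n ω) - Sg) a b) μ :=
    fun n a b => (hentmem n a b).integrable one_le_two
  have hentmean : ∀ n (a b : Fin M), ∫ ω, (vecMulVec (x n ω) (x n ω) - Sg) a b ∂μ = 0 := by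
    intro n a b
    simp only [Matrix.sub_apply, vecMulVec_apply]
    rw [integral_sub (hx2int n a b) (integrable_const _), hcov n a b, integral_const]
    simp
  -- entries of the projected, centered matrices (the "Z" variables)
  have hZmem : ∀ n (i j : Fin M), MemLp (fun ω =>
      ((vecMulVec (x n ω) (x n ω) - Sg) - reynolds ρ (vecMulVec (x n ω) (x n ω) - Sg)) i j) 2 μ := by
    intro n i j
    have := (hentmem n i j).sub (memLp_reynolds_entry ρ (hentmem n) i j)
    simpa [Matrix.sub_apply, Pi.sub_def] using this
  have hZint : ∀ n (i j : Fin M), Integrable (fun ω =>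
      ((vecMulVec (x n ω) (x n ω) - Sg) - reynolds ρ (vecMulVec (x n ω) (x n ω) - Sg)) i j) μ :=
    fun n i j => (hZmem n i j).integrable one_le_two
  have hZmean : ∀ n (i j : Fin M), (∫ ω,
      ((vecMulVec (x n ω) (x n ω) - Sg) - reynolds ρ (vecMulVec (x n ω) (x n ω) - Sg)) i j ∂μ) = 0 := by
    intro n i j
    have hsplit : (fun ω =>
        ((vecMulVec (x n ω) (x n ω) - Sg) - reynolds ρ (vecMulVec (x n ω) (x n ω) - Sg)) i j) =
        fun ω => (vecMulVec (x n ω) (x n ω) - Sg) i j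
          - reynolds ρ (vecMulVec (x n ω) (x n ω) - Sg) i j := rfl
    rw [hsplit, integral_sub (hentint n i j)
      ((memLp_reynolds_entry ρ (hentmem n) i j).integrable one_le_two),
      hentmean n i j, integral_reynolds_entry ρ (hentint n) i j]
    have h0 : (Matrix.of fun a b => ∫ ω, (vecMulVec (x n ω) (x n ω) - Sg) a b ∂μ)
        = (0 : Matrix (Fin M) (Fin M) ℝ) := by
      ext a b; simpa using hentmean n a b
    rw [h0, reynolds_zero]
    simp
  -- measurability of the vector-level maps
  have hζmeas : ∀ i j : Fin M, Measurable (fun v : Fin M → ℝ =>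
      ((vecMulVec v v - Sg) - reynolds ρ (vecMulVec v v - Sg)) i j) := by
    intro i j
    have hent : ∀ a b : Fin M, Measurable fun v : Fin M → ℝ => (vecMulVec v v - Sg) a b := by
      intro a b
      simpa [Matrix.sub_apply, vecMulVec_apply, Pi.sub_def, Pi.mul_def] using
        ((measurable_pi_apply a).mul (measurable_pi_apply b)).sub measurable_const
    exact (hent i j).sub (measurable_reynolds_entry ρ hent i j)
  have hvmeas : ∀ a b : Fin M, Measurable fun v : Fin M → ℝ => vecMulVec v v a b := by
    intro a b
    simpa [vecMulVec_apply, Pi.mul_def] using (measurable_pi_apply a).mul (measurable_pi_apply b)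
  have hψWmeas : Measurable (fun v : Fin M → ℝ =>
      frobSq (vecMulVec v v - reynolds ρ (vecMulVec v v))) :=
    measurable_frobSq_entry (fun a b =>
      (hvmeas a b).sub (measurable_reynolds_entry ρ hvmeas a b))
  -- SLLN for covariance entries
  have hcovAE : ∀ᵐ ω ∂μ, ∀ i j : Fin M, Tendsto
      (fun N : ℕ => (∑ k ∈ Finset.range N, x k ω i * x k ω j) / N) atTop (𝓝 (Sg i j)) := by
    rw [ae_all_iff]; intro i; rw [ae_all_iff]; intro j
    have hmeasφ : Measurable (fun v : Fin M → ℝ => v i * v j) :=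
      (measurable_pi_apply i).mul (measurable_pi_apply j)
    have h := strong_law_ae_real (fun k ω => x k ω i * x k ω j) (hx2int 0 i j)
      (fun k l hkl => (hindep.indepFun hkl).comp hmeasφ hmeasφ)
      (fun k => (hident k 0).comp hmeasφ)
    simpa [hcov 0 i j] using h
  -- SLLN for the fourth-moment quantity W
  have hQYmem : ∀ n (i j : Fin M), MemLp (fun ω =>
      (vecMulVec (x n ω) (x n ω) - reynolds ρ (vecMulVec (x n ω) (x n ω))) i j) 2 μ := by
    intro n i j
    have hent : ∀ a b : Fin M, MemLp (fun ω => vecMulVec (x n ω) (x n ω) a b) 2 μ := by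
      intro a b; simpa [vecMulVec_apply] using hx2 n a b
    have := (hent i j).sub (memLp_reynolds_entry ρ hent i j)
    simpa [Matrix.sub_apply, Pi.sub_def] using this
  have hWint : Integrable (fun ω =>
      frobSq (vecMulVec (x 0 ω) (x 0 ω) - reynolds ρ (vecMulVec (x 0 ω) (x 0 ω)))) μ := by
    have h : (fun ω =>
        frobSq (vecMulVec (x 0 ω) (x 0 ω) - reynolds ρ (vecMulVec (x 0 ω) (x 0 ω)))) =
        fun ω => ∑ i, ∑ j,
          ((vecMulVec (x 0 ω) (x 0 ω) - reynolds ρ (vecMulVec (x 0 ω) (x 0 ω))) i j) ^ 2 := rfl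
    rw [h]
    exact integrable_finset_sum _ fun i _ => integrable_finset_sum _ fun j _ =>
      (hQYmem 0 i j).integrable_sq
  have hWAE : ∀ᵐ ω ∂μ, Tendsto (fun N : ℕ =>
      (∑ k ∈ Finset.range N,
        frobSq (vecMulVec (x k ω) (x k ω) - reynolds ρ (vecMulVec (x k ω) (x k ω)))) / N) atTop
      (𝓝 (∫ ω, frobSq (vecMulVec (x 0 ω) (x 0 ω)
          - reynolds ρ (vecMulVec (x 0 ω) (x 0 ω))) ∂μ)) := by
    exact strong_law_ae_real
      (fun k ω => frobSq (vecMulVec (x k ω) (x k ω) - reynolds ρ (vecMulVec (x k ω) (x k ω))))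
      hWint
      (fun k l hkl => (hindep.indepFun hkl).comp hψWmeas hψWmeas)
      (fun k => (hident k 0).comp hψWmeas)
  -- D is positive
  have hVperp0 : Vperp 0 = D := by
    rw [hVperp 0]
    have hptw : ∀ ω : Ω,
        frobSq ((sampleCovN x 0 ω - Sg) - reynolds ρ (sampleCovN x 0 ω - Sg)) = D := by
      intro ω
      have h0 : sampleCovN x 0 ω = 0 := by simp [sampleCovN]
      rw [h0, zero_sub]
      have hneg : reynolds ρ (-Sg) = -reynolds ρ Sg := by
        have := reynolds_sub ρ 0 Sg
        simpa [reynolds_zero, zero_sub] using this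
      rw [hneg]
      have : (-Sg) - (-(reynolds ρ Sg)) = -(Sg - reynolds ρ Sg) := by abel
      rw [this, frobSq_neg, hD, hB]
    simp only [hptw]
    simp
  have hDpos : 0 < D := by have h := hpos 0; rw [hVperp0] at h; linarith
  -- the exact value of Vperp N for N ≥ 1
  have hVperpN : ∀ N : ℕ, 1 ≤ N → Vperp N =
      (∑ i : Fin M, ∑ j : Fin M, variance (fun ω =>
        ((vecMulVec (x 0 ω) (x 0 ω) - Sg)
          - reynolds ρ (vecMulVec (x 0 ω) (x 0 ω) - Sg)) i j) μ) / N := by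
    intro N hN
    have hNne : (N : ℝ) ≠ 0 := Nat.cast_ne_zero.2 (Nat.one_le_iff_ne_zero.1 hN)
    rw [hVperp N]
    have hpoint : ∀ ω : Ω, (sampleCovN x N ω - Sg) - reynolds ρ (sampleCovN x N ω - Sg) =
        (N : ℝ)⁻¹ • ∑ k ∈ Finset.range N, ((vecMulVec (x k ω) (x k ω) - Sg)
          - reynolds ρ (vecMulVec (x k ω) (x k ω) - Sg)) := by
      intro ω
      have h1 : sampleCovN x N ω - Sg =
          (N : ℝ)⁻¹ • ∑ k ∈ Finset.range N, (vecMulVec (x k ω) (x k ω) - Sg) := by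
        rw [Finset.sum_sub_distrib, Finset.sum_const, Finset.card_range, smul_sub, sampleCovN]
        congr 1
        rw [← Nat.cast_smul_eq_nsmul ℝ, smul_smul, inv_mul_cancel₀ hNne, one_smul]
      rw [h1, reynolds_smul, reynolds_sum, ← smul_sub, ← Finset.sum_sub_distrib]
    have hfr : ∀ ω : Ω,
        frobSq ((sampleCovN x N ω - Sg) - reynolds ρ (sampleCovN x N ω - Sg)) =
        ∑ i, ∑ j, ((N : ℝ)⁻¹ * ∑ k ∈ Finset.range N,
          ((vecMulVec (x k ω) (x k ω) - Sg)
            - reynolds ρ (vecMulVec (x k ω) (x k ω) - Sg)) i j) ^ 2 := by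
      intro ω
      rw [hpoint ω]
      simp only [frobSq, Matrix.smul_apply, Matrix.sum_apply, smul_eq_mul]
    simp only [hfr]
    have hmemsum : ∀ i j : Fin M, MemLp (fun ω => ∑ k ∈ Finset.range N,
        ((vecMulVec (x k ω) (x k ω) - Sg)
          - reynolds ρ (vecMulVec (x k ω) (x k ω) - Sg)) i j) 2 μ :=
      fun i j => memLp_finset_sum _ fun k _ => hZmem k i j
    have hint2 : ∀ i j : Fin M, Integrable (fun ω => ((N : ℝ)⁻¹ * ∑ k ∈ Finset.range N,
        ((vecMulVec (x k ω) (x k ω) - Sg)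
          - reynolds ρ (vecMulVec (x k ω) (x k ω) - Sg)) i j) ^ 2) μ :=
      fun i j => ((hmemsum i j).const_mul _).integrable_sq
    rw [integral_finset_sum _ fun i _ => integrable_finset_sum _ fun j _ => hint2 i j]
    have hswap : ∀ i : Fin M, (∫ ω, ∑ j, ((N : ℝ)⁻¹ * ∑ k ∈ Finset.range N,
        ((vecMulVec (x k ω) (x k ω) - Sg)
          - reynolds ρ (vecMulVec (x k ω) (x k ω) - Sg)) i j) ^ 2 ∂μ) =
        ∑ j, ∫ ω, ((N : ℝ)⁻¹ * ∑ k ∈ Finset.range N,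
        ((vecMulVec (x k ω) (x k ω) - Sg)
          - reynolds ρ (vecMulVec (x k ω) (x k ω) - Sg)) i j) ^ 2 ∂μ :=
      fun i => integral_finset_sum _ fun j _ => hint2 i j
    simp only [hswap]
    rw [Finset.sum_div]
    refine Finset.sum_congr rfl fun i _ => ?_
    rw [Finset.sum_div]
    refine Finset.sum_congr rfl fun j _ => ?_
    -- per-entry variance computation
    have hSmean : (∫ ω, ∑ k ∈ Finset.range N, ((vecMulVec (x k ω) (x k ω) - Sg)
        - reynolds ρ (vecMulVec (x k ω) (x k ω) - Sg)) i j ∂μ) = 0 := by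
      rw [integral_finset_sum _ fun k _ => hZint k i j]
      refine Finset.sum_eq_zero fun k _ => ?_
      simpa using hZmean k i j
    have hvarsum : variance (fun ω => ∑ k ∈ Finset.range N,
        ((vecMulVec (x k ω) (x k ω) - Sg)
          - reynolds ρ (vecMulVec (x k ω) (x k ω) - Sg)) i j) μ =
        (N : ℝ) * variance (fun ω => ((vecMulVec (x 0 ω) (x 0 ω) - Sg)
          - reynolds ρ (vecMulVec (x 0 ω) (x 0 ω) - Sg)) i j) μ := by
      have hfn : (fun ω => ∑ k ∈ Finset.range N,
          ((vecMulVec (x k ω) (x k ω) - Sg)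
            - reynolds ρ (vecMulVec (x k ω) (x k ω) - Sg)) i j) =
          ∑ k ∈ Finset.range N, (fun ω => ((vecMulVec (x k ω) (x k ω) - Sg)
            - reynolds ρ (vecMulVec (x k ω) (x k ω) - Sg)) i j) := by
        funext ω; simp [Finset.sum_apply]
      rw [hfn, IndepFun.variance_sum (fun k _ => hZmem k i j)
        (fun k _ l _ hkl => (hindep.indepFun hkl).comp (hζmeas i j) (hζmeas i j))]
      have : ∀ k ∈ Finset.range N, variance (fun ω => ((vecMulVec (x k ω) (x k ω) - Sg)
          - reynolds ρ (vecMulVec (x k ω) (x k ω) - Sg)) i j) μ =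
          variance (fun ω => ((vecMulVec (x 0 ω) (x 0 ω) - Sg)
            - reynolds ρ (vecMulVec (x 0 ω) (x 0 ω) - Sg)) i j) μ :=
        fun k _ => ((hident k 0).comp (hζmeas i j)).variance_eq
      rw [Finset.sum_congr rfl this, Finset.sum_const, Finset.card_range, nsmul_eq_mul]
    have hvar := variance_eq_sub (hmemsum i j)
    simp only [Pi.pow_apply] at hvar
    have hsq : (∫ ω, (∑ k ∈ Finset.range N, ((vecMulVec (x k ω) (x k ω) - Sg)
        - reynolds ρ (vecMulVec (x k ω) (x k ω) - Sg)) i j) ^ 2 ∂μ) =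
        (N : ℝ) * variance (fun ω => ((vecMulVec (x 0 ω) (x 0 ω) - Sg)
          - reynolds ρ (vecMulVec (x 0 ω) (x 0 ω) - Sg)) i j) μ := by
      rw [← hvarsum, hvar, hSmean]
      ring
    simp_rw [mul_pow]
    rw [integral_const_mul, hsq]
    field_simp
  -- Vperp tends to zero
  have hVlim : Tendsto Vperp atTop (𝓝 0) := by
    have h := tendsto_const_div_atTop_nhds_zero_nat
      (∑ i : Fin M, ∑ j : Fin M, variance (fun ω => ((vecMulVec (x 0 ω) (x 0 ω) - Sg)
        - reynolds ρ (vecMulVec (x 0 ω) (x 0 ω) - Sg)) i j) μ)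
    refine h.congr' ?_
    filter_upwards [eventually_ge_atTop 1] with N hN
    exact (hVperpN N hN).symm
  have hratiolim : Tendsto (fun N => Vperp N / (Vperp N + D)) atTop (𝓝 0) := by
    have hne : (0 : ℝ) + D ≠ 0 := by linarith
    have := hVlim.div (hVlim.add tendsto_const_nhds) hne
    simpa [Pi.div_def] using this
  -- a.e. pointwise limits
  have hmain : ∀ᵐ ω ∂μ, Tendsto (fun N => Vhat N ω) atTop (𝓝 0) ∧
      Tendsto (fun N => VDhat N ω) atTop (𝓝 D) ∧
      Tendsto (fun N => αhat N ω) atTop (𝓝 0) := by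
    filter_upwards [hcovAE, hWAE] with ω hcovω hWω
    have hRlim : Tendsto (fun N => sampleCovN x N ω) atTop (𝓝 Sg) := by
      refine tendsto_pi_nhds.2 ?_
      intro i
      rw [tendsto_pi_nhds]
      intro j
      refine (hcovω i j).congr fun N => ?_
      simp [sampleCovN, Matrix.smul_apply, Matrix.sum_apply, vecMulVec_apply, smul_eq_mul,
        div_eq_inv_mul]
    have hQlim : Tendsto (fun N => sampleCovN x N ω - reynolds ρ (sampleCovN x N ω)) atTop
        (𝓝 (Sg - reynolds ρ Sg)) :=
      hRlim.sub (((reynolds_continuous ρ).tendsto Sg).comp hRlim)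
    have hFlim : Tendsto (fun N =>
        frobSq (sampleCovN x N ω - reynolds ρ (sampleCovN x N ω))) atTop (𝓝 D) := by
      have h := (frobSq_continuous.tendsto _).comp hQlim
      rw [hD, hB]
      exact h
    have hVDlim : Tendsto (fun N => VDhat N ω) atTop (𝓝 D) :=
      hFlim.congr fun N => (hVDhat N ω).symm
    have hVhat0 : Tendsto (fun N => Vhat N ω) atTop (𝓝 0) := by
      have hlb : ∀ N : ℕ, 0 ≤ Vhat N ω := by
        intro N
        rw [hVhat N ω]
        exact mul_nonneg (by positivity) (Finset.sum_nonneg fun k _ => frobSq_nonneg _)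
      have hub : ∀ N : ℕ, Vhat N ω ≤ (N : ℝ)⁻¹ *
          (2 * ((∑ k ∈ Finset.range N, frobSq (vecMulVec (x k ω) (x k ω)
              - reynolds ρ (vecMulVec (x k ω) (x k ω)))) / N)
            + 2 * frobSq (sampleCovN x N ω - reynolds ρ (sampleCovN x N ω))) := by
        intro N
        rw [hVhat N ω]
        rcases Nat.eq_zero_or_pos N with h0 | hNpos
        · subst h0; simp
        have hNne : (N : ℝ) ≠ 0 := Nat.cast_ne_zero.2 hNpos.ne'
        have hsum : (∑ k ∈ Finset.range N,
            frobSq ((vecMulVec (x k ω) (x k ω) - reynolds ρ (vecMulVec (x k ω) (x k ω)))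
              - (sampleCovN x N ω - reynolds ρ (sampleCovN x N ω)))) ≤
            (∑ k ∈ Finset.range N, 2 * frobSq (vecMulVec (x k ω) (x k ω)
              - reynolds ρ (vecMulVec (x k ω) (x k ω))))
            + N * (2 * frobSq (sampleCovN x N ω - reynolds ρ (sampleCovN x N ω))) := by
          calc (∑ k ∈ Finset.range N,
              frobSq ((vecMulVec (x k ω) (x k ω) - reynolds ρ (vecMulVec (x k ω) (x k ω)))
                - (sampleCovN x N ω - reynolds ρ (sampleCovN x N ω)))) ≤
              ∑ k ∈ Finset.range N, (2 * frobSq (vecMulVec (x k ω) (x k ω)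
                - reynolds ρ (vecMulVec (x k ω) (x k ω)))
                + 2 * frobSq (sampleCovN x N ω - reynolds ρ (sampleCovN x N ω))) :=
              Finset.sum_le_sum fun k _ => frobSq_sub_le _ _
            _ = _ := by
              rw [Finset.sum_add_distrib, Finset.sum_const, Finset.card_range, nsmul_eq_mul]
      
        calc ((N : ℝ) ^ 2)⁻¹ * ∑ k ∈ Finset.range N,
            frobSq ((vecMulVec (x k ω) (x k ω) - reynolds ρ (vecMulVec (x k ω) (x k ω)))
              - (sampleCovN x N ω - reynolds ρ (sampleCovN x N ω))) ≤
            ((N : ℝ) ^ 2)⁻¹ * ((∑ k ∈ Finset.range N, 2 * frobSq (vecMulVec (x k ω) (x k ω)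
              - reynolds ρ (vecMulVec (x k ω) (x k ω))))
            + N * (2 * frobSq (sampleCovN x N ω - reynolds ρ (sampleCovN x N ω)))) :=
            mul_le_mul_of_nonneg_left hsum (by positivity)
          _ = (N : ℝ)⁻¹ *
            (2 * ((∑ k ∈ Finset.range N, frobSq (vecMulVec (x k ω) (x k ω)
                - reynolds ρ (vecMulVec (x k ω) (x k ω)))) / N)
              + 2 * frobSq (sampleCovN x N ω - reynolds ρ (sampleCovN x N ω))) := by
            rw [← Finset.mul_sum]
            field_simp
      have hg : Tendsto (fun N : ℕ => (N : ℝ)⁻¹ *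
          (2 * ((∑ k ∈ Finset.range N, frobSq (vecMulVec (x k ω) (x k ω)
              - reynolds ρ (vecMulVec (x k ω) (x k ω)))) / N)
            + 2 * frobSq (sampleCovN x N ω - reynolds ρ (sampleCovN x N ω)))) atTop (𝓝 0) := by
        have := tendsto_inv_atTop_nhds_zero_nat.mul
          ((hWω.const_mul 2).add (hFlim.const_mul 2))
        simpa using this
      exact tendsto_of_tendsto_of_tendsto_of_le_of_le tendsto_const_nhds hg hlb hub
    have hαlim : Tendsto (fun N => αhat N ω) atTop (𝓝 0) := by
      have hdiv : Tendsto (fun N => Vhat N ω / VDhat N ω) atTop (𝓝 0) := by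
        have := hVhat0.div hVDlim hDpos.ne'
        simpa [Pi.div_def] using this
      have hmax : Tendsto (fun N => max 0 (Vhat N ω / VDhat N ω)) atTop (𝓝 0) := by
        have := (tendsto_const_nhds (x := (0:ℝ)) (f := atTop (α := ℕ))).max hdiv
        simpa using this
      have hmin : Tendsto (fun N => min 1 (max 0 (Vhat N ω / VDhat N ω))) atTop (𝓝 0) := by
        have := (tendsto_const_nhds (x := (1:ℝ)) (f := atTop (α := ℕ))).min hmax
        simpa using this
      exact hmin.congr fun N => (hαhat N ω).symm
    exact ⟨hVhat0, hVDlim, hαlim⟩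
  -- measurability in ω for each N
  have hCovEnt : ∀ N (a b : Fin M), Measurable fun ω => sampleCovN x N ω a b := by
    intro N a b
    simp only [sampleCovN, Matrix.smul_apply, Matrix.sum_apply, vecMulVec_apply, smul_eq_mul]
    exact (Finset.measurable_sum _ fun k _ => (hmeas k a).mul (hmeas k b)).const_mul _
  have hQCovEnt : ∀ N (i j : Fin M),
      Measurable fun ω => (sampleCovN x N ω - reynolds ρ (sampleCovN x N ω)) i j := by
    intro N i j
    exact (hCovEnt N i j).sub (measurable_reynolds_entry ρ (hCovEnt N) i j)
  have hYEnt : ∀ k (a b : Fin M), Measurable fun ω => vecMulVec (x k ω) (x k ω) a b := by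
    intro k a b
    simpa [vecMulVec_apply, Pi.mul_def] using (hmeas k a).mul (hmeas k b)
  have hVDmeas : ∀ N, Measurable (VDhat N) := by
    intro N
    have h : VDhat N = fun ω => frobSq (sampleCovN x N ω - reynolds ρ (sampleCovN x N ω)) :=
      funext fun ω => hVDhat N ω
    rw [h]
    exact measurable_frobSq_entry (hQCovEnt N)
  have hVhatMeas : ∀ N, Measurable (Vhat N) := by
    intro N
    have h : Vhat N = fun ω => ((N : ℝ) ^ 2)⁻¹ * ∑ k ∈ Finset.range N,
        frobSq ((vecMulVec (x k ω) (x k ω) - reynolds ρ (vecMulVec (x k ω) (x k ω)))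
          - (sampleCovN x N ω - reynolds ρ (sampleCovN x N ω))) := funext fun ω => hVhat N ω
    rw [h]
    refine (Finset.measurable_sum _ fun k _ => measurable_frobSq_entry fun i j => ?_).const_mul _
    exact ((hYEnt k i j).sub (measurable_reynolds_entry ρ (hYEnt k) i j)).sub (hQCovEnt N i j)
  have hαMeas : ∀ N, Measurable (αhat N) := by
    intro N
    have h : αhat N = fun ω => min 1 (max 0 (Vhat N ω / VDhat N ω)) := funext fun ω => hαhat N ω
    rw [h]
    exact measurable_const.min (measurable_const.max ((hVhatMeas N).div (hVDmeas N)))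
  -- conclude
  refine ⟨?_, ?_, ?_⟩
  · refine tendstoInMeasure_of_tendsto_ae
      (fun N => ((hVhatMeas N).sub measurable_const).aestronglyMeasurable) ?_
    filter_upwards [hmain] with ω h
    simpa using h.1.sub hVlim
  · refine tendstoInMeasure_of_tendsto_ae
      (fun N => ((hVDmeas N).sub measurable_const).aestronglyMeasurable) ?_
    filter_upwards [hmain] with ω h
    simpa using h.2.1.sub (hVlim.add (tendsto_const_nhds (x := D)))
  · refine tendstoInMeasure_of_tendsto_ae
      (fun N => ((hαMeas N).sub measurable_const).aestronglyMeasurable) ?_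
    filter_upwards [hmain] with ω h
    simpa using h.2.2.sub hratiolim


end
end

section
/- Let Σ be a symmetric positive-definite M×M matrix, B_G = Σ − P_G(Σ), and for α ∈ [0,1] let Σ_α^pop = Σ − α B_G. Define the population negative log-likelihood L_pop(α) = (1/2)(log det Σ_α^pop + tr((Σ_α^pop)⁻¹ Σ)). If B_G ≠ 0, then L_pop is strictly increasing on (0,1], so its unique minimizer on [0,1] is α = 0; if B_G = 0, then L_pop is constant in α on [0,1]. -/
open Matrix

noncomputable section

lemma aux_smul_posDef {n : ℕ} {A : Matrix (Fin n) (Fin n) ℝ} (hA : A.PosDef) {c : ℝ} (hc : 0 < c) :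
    (c • A).PosDef := by
  refine Matrix.PosDef.of_dotProduct_mulVec_pos ?_ (fun x hx => ?_)
  · unfold Matrix.IsHermitian
    rw [conjTranspose_smul, hA.1.eq]; simp
  · rw [smul_mulVec, dotProduct_smul, smul_eq_mul]
    exact mul_pos hc (hA.dotProduct_mulVec_pos hx)

lemma aux_conj_posDef {n : ℕ} {A P : Matrix (Fin n) (Fin n) ℝ} (hA : A.PosDef) (hP : IsUnit P) :
    (Pᴴ * A * P).PosDef := by
  refine Matrix.PosDef.of_dotProduct_mulVec_pos (isHermitian_conjTranspose_mul_mul P hA.1) (fun x hx => ?_)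
  have hPx : P *ᵥ x ≠ 0 := (Matrix.mulVec_injective_iff_isUnit.mpr hP).ne_iff' (by simp) |>.2 hx
  have := hA.dotProduct_mulVec_pos hPx
  rw [star_mulVec] at this
  rwa [mul_assoc, ← mulVec_mulVec, dotProduct_mulVec, ← mulVec_mulVec]

lemma aux_reynolds_posDef {M : ℕ} {G : Type*} [Group G] [Fintype G]
    (ρ : G → Matrix (Fin M) (Fin M) ℝ)
    (hρorth : ∀ g : G, ρ g * (ρ g)ᵀ = 1)
    (Sg : Matrix (Fin M) (Fin M) ℝ) (hSg : Sg.PosDef) :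
    (reynolds ρ Sg).PosDef := by
  have hcard : (0:ℝ) < (Fintype.card G : ℝ)⁻¹ := by positivity
  refine aux_smul_posDef ?_ hcard
  have hterm : ∀ g : G, (ρ g * Sg * (ρ g)ᵀ).PosDef := by
    intro g
    have hU : IsUnit (ρ g)ᵀ := by
      have := invertibleOfLeftInverse _ _ (hρorth g)
      exact isUnit_of_invertible _
    have := aux_conj_posDef hSg hU
    rwa [conjTranspose_eq_transpose_of_trivial, transpose_transpose] at this
  refine Matrix.PosDef.of_dotProduct_mulVec_pos ?_ (fun x hx => ?_)
  · unfold Matrix.IsHermitian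
    rw [conjTranspose_sum]
    exact Finset.sum_congr rfl (fun g _ => (hterm g).1)
  · have hsum : (∑ g : G, ρ g * Sg * (ρ g)ᵀ) *ᵥ x = ∑ g : G, (ρ g * Sg * (ρ g)ᵀ) *ᵥ x :=
      map_sum (Matrix.mulVec.addMonoidHomLeft x) _ Finset.univ
    have hdp : star x ⬝ᵥ ∑ g : G, (ρ g * Sg * (ρ g)ᵀ) *ᵥ x
        = ∑ g : G, star x ⬝ᵥ (ρ g * Sg * (ρ g)ᵀ) *ᵥ x := by
      simp [dotProduct, Finset.mul_sum, Finset.sum_apply]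
      exact Finset.sum_comm
    rw [hsum, hdp]
    exact Finset.sum_pos (fun g _ => (hterm g).dotProduct_mulVec_pos hx) Finset.univ_nonempty

open scoped MatrixOrder in
lemma aux_key {n : ℕ} (Sg B : Matrix (Fin n) (Fin n) ℝ) (hSg : Sg.PosDef) (hB : B.IsHermitian)
    (hR : (Sg - B).PosDef) :
    ∃ d : Fin n → ℝ, (∀ i, d i < 1) ∧ (B ≠ 0 → ∃ i, d i ≠ 0) ∧
      ∀ α : ℝ, (∀ i, 1 - α * d i ≠ 0) →
        (Sg - α • B).det = Sg.det * ∏ i, (1 - α * d i) ∧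
        Matrix.trace ((Sg - α • B)⁻¹ * Sg) = ∑ i, (1 - α * d i)⁻¹ := by
  set Q := CFC.sqrt Sg with hQdef
  have hQQ : Q * Q = Sg := CFC.sqrt_mul_sqrt_self Sg hSg.posSemidef.nonneg
  have hQH : Q.IsHermitian := (Matrix.nonneg_iff_posSemidef.mp (CFC.sqrt_nonneg Sg)).1
  have hQdet : IsUnit Q.det := by
    have h1 : Q.det * Q.det = Sg.det := by rw [← det_mul, hQQ]
    have : Q.det ≠ 0 := by
      intro h; rw [h, mul_zero] at h1; exact hSg.det_pos.ne (by linarith)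
    exact this.isUnit
  have hQunit : IsUnit Q := (Matrix.isUnit_iff_isUnit_det Q).mpr hQdet
  have hQiQ : Q⁻¹ * Q = 1 := Matrix.nonsing_inv_mul Q hQdet
  have hQQi : Q * Q⁻¹ = 1 := Matrix.mul_nonsing_inv Q hQdet
  have hQiH : Q⁻¹.IsHermitian := hQH.inv
  have hQidet : IsUnit Q⁻¹.det := Matrix.isUnit_nonsing_inv_det Q hQdet
  set D := Q⁻¹ * B * Q⁻¹ with hDdef
  have hD : D.IsHermitian := by
    unfold Matrix.IsHermitian
    rw [hDdef, conjTranspose_mul, conjTranspose_mul, hQiH.eq, hB.eq]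
    rw [mul_assoc]
  set d := hD.eigenvalues with hddef
  set U : Matrix (Fin n) (Fin n) ℝ := (hD.eigenvectorUnitary : Matrix (Fin n) (Fin n) ℝ) with hUdef
  have hU2 : star U * U = 1 := Unitary.coe_star_mul_self (hD.eigenvectorUnitary)
  have hU1 : U * star U = 1 := Unitary.coe_mul_star_self (hD.eigenvectorUnitary)
  have hspec : D = U * diagonal d * star U := by
    have := hD.spectral_theorem
    simpa using this
  have hUunit : IsUnit U := by
    have := invertibleOfLeftInverse _ _ hU2
    exact isUnit_of_invertible U
  have hQiunit : IsUnit Q⁻¹ := (Matrix.isUnit_iff_isUnit_det _).mpr hQidet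
  have hBQ : B = Q * D * Q := by
    rw [hDdef]
    calc B = (Q * Q⁻¹) * B * (Q⁻¹ * Q) := by rw [hQQi, hQiQ, one_mul, mul_one]
    _ = Q * (Q⁻¹ * B * Q⁻¹) * Q := by simp only [mul_assoc]
  have hQiSgQi : Q⁻¹ * Sg * Q⁻¹ = 1 := by
    rw [← hQQ]
    calc Q⁻¹ * (Q * Q) * Q⁻¹ = (Q⁻¹ * Q) * (Q * Q⁻¹) := by simp only [mul_assoc]
    _ = 1 := by rw [hQiQ, hQQi, one_mul]
  have hone : (1 : Matrix (Fin n) (Fin n) ℝ) - D = Q⁻¹ᴴ * (Sg - B) * Q⁻¹ := by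
    rw [hQiH.eq, mul_sub, sub_mul, hDdef, hQiSgQi]
  have h1D : ((1 : Matrix (Fin n) (Fin n) ℝ) - D).PosDef := by
    rw [hone]; exact aux_conj_posDef hR hQiunit
  have hdiag1 : diagonal (fun i => 1 - d i) = Uᴴ * ((1 : Matrix (Fin n) (Fin n) ℝ) - D) * U := by
    rw [← Matrix.star_eq_conjTranspose, mul_sub, sub_mul, mul_one, hU2, hspec]
    have : star U * (U * diagonal d * star U) * U = diagonal d := by
      calc star U * (U * diagonal d * star U) * U
          = (star U * U) * diagonal d * (star U * U) := by simp only [mul_assoc]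
        _ = diagonal d := by rw [hU2, one_mul, mul_one]
    rw [this]
    have hd1 : (diagonal (fun i => 1 - d i) : Matrix (Fin n) (Fin n) ℝ)
        = diagonal (fun _ => (1:ℝ)) - diagonal d := by
      rw [Matrix.diagonal_sub]
    rw [hd1, Matrix.diagonal_one]
  have hdlt : ∀ i, d i < 1 := by
    intro i
    have := (Matrix.posDef_diagonal_iff.mp (hdiag1 ▸ aux_conj_posDef h1D hUunit)) i
    linarith
  refine ⟨d, hdlt, ?_, ?_⟩
  · intro hBne
    by_contra h
    push_neg at h
    have hd0 : d = fun _ => (0:ℝ) := funext fun i => h i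
    apply hBne
    rw [hBQ, hspec, hd0]
    simp only [Matrix.diagonal_zero, Matrix.mul_zero, Matrix.zero_mul, mul_zero, zero_mul]
  · intro α hα
    set f : Fin n → ℝ := fun i => 1 - α * d i with hfdef
    have hdiagf : (diagonal f : Matrix (Fin n) (Fin n) ℝ) = 1 - α • diagonal d := by
      rw [← Matrix.diagonal_smul, ← Matrix.diagonal_one, ← Matrix.diagonal_sub]
      have hfun : (fun i => α * d i) = α • d := funext fun i => rfl
      rw [hfun]
    have hSα : Sg - α • B = Q * (U * diagonal f * star U) * Q := by
      have h1 : U * diagonal f * star U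
          = 1 - α • (U * diagonal d * star U) := by
        rw [hdiagf, mul_sub, sub_mul, mul_one, hU1, mul_smul_comm, smul_mul_assoc]
      rw [h1, mul_sub, sub_mul, mul_one, hQQ, mul_smul_comm, smul_mul_assoc, ← hspec, ← hBQ]
    have hdetT : (U * diagonal f * star U).det = ∏ i, f i := by
      rw [det_mul_right_comm, hU1, one_mul, det_diagonal]
    constructor
    · rw [hSα, det_mul, det_mul, hdetT, mul_right_comm, ← det_mul, hQQ]
    · have hf' : IsUnit (diagonal f).det := by
        rw [det_diagonal]
        exact (Finset.prod_ne_zero_iff.mpr fun i _ => hα i).isUnit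
      have hUinv : U⁻¹ = star U := Matrix.inv_eq_left_inv hU2
      have hUsinv : (star U)⁻¹ = U := Matrix.inv_eq_left_inv hU1
      have hinvdiag : (diagonal f)⁻¹ = diagonal (fun i => (f i)⁻¹) := by
        refine Matrix.inv_eq_left_inv ?_
        rw [Matrix.diagonal_mul_diagonal]
        have hfun : (fun i => (f i)⁻¹ * f i) = fun _ => (1:ℝ) :=
          funext fun i => inv_mul_cancel₀ (hα i)
        rw [hfun, Matrix.diagonal_one]
      have hinvT : (U * diagonal f * star U)⁻¹ = U * diagonal (fun i => (f i)⁻¹) * star U := by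
        rw [Matrix.mul_inv_rev, Matrix.mul_inv_rev, hUinv, hUsinv, hinvdiag]
        simp only [mul_assoc]
      have hSαinv : (Sg - α • B)⁻¹ = Q⁻¹ * (U * diagonal (fun i => (f i)⁻¹) * star U) * Q⁻¹ := by
        rw [hSα, Matrix.mul_inv_rev, Matrix.mul_inv_rev, hinvT]
        simp only [mul_assoc]
      rw [hSαinv, ← hQQ]
      have hcalc : Q⁻¹ * (U * diagonal (fun i => (f i)⁻¹) * star U) * Q⁻¹ * (Q * Q)
          = Q⁻¹ * ((U * diagonal (fun i => (f i)⁻¹) * star U) * Q) := by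
        calc Q⁻¹ * (U * diagonal (fun i => (f i)⁻¹) * star U) * Q⁻¹ * (Q * Q)
            = Q⁻¹ * ((U * diagonal (fun i => (f i)⁻¹) * star U) * ((Q⁻¹ * Q) * Q)) := by
              simp only [mul_assoc]
          _ = _ := by rw [hQiQ, one_mul]
      rw [hcalc, Matrix.trace_mul_comm, Matrix.mul_nonsing_inv_cancel_right _ _ hQdet]
      rw [Matrix.trace_mul_comm, ← mul_assoc, hU2, one_mul, Matrix.trace_diagonal]

/-- **Population NLL minimum.**
For a symmetric positive-definite population covariance `Sg`, with `B_G = Sg − P_G(Sg)` and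
`Sg_α = Sg − α B_G`, the population negative log-likelihood
`L_pop(α) = ½(log det Sg_α + tr(Sg_α⁻¹ Sg))` is strictly increasing on `(0,1]` when
`B_G ≠ 0`, so its unique minimizer on `[0,1]` is `α = 0`; when `B_G = 0` it is constant in `α`
on `[0,1]`. -/
theorem population_nll_minimum
    {M : ℕ} {G : Type*} [Group G] [Fintype G]
    (ρ : G → Matrix (Fin M) (Fin M) ℝ)
    (hρ1 : ρ 1 = 1) (hρmul : ∀ g h : G, ρ (g * h) = ρ g * ρ h)
    (hρorth : ∀ g : G, ρ g * (ρ g)ᵀ = 1)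
    (Sg : Matrix (Fin M) (Fin M) ℝ) (hSg : Sg.PosDef)
    (B : Matrix (Fin M) (Fin M) ℝ) (hB : B = Sg - reynolds ρ Sg)
    (L : ℝ → ℝ)
    (hL : L = fun α : ℝ =>
      (1 / 2) * (Real.log (Sg - α • B).det + Matrix.trace ((Sg - α • B)⁻¹ * Sg))) :
    (B ≠ 0 →
      StrictMonoOn L (Set.Ioc (0 : ℝ) 1) ∧
      ∀ α ∈ Set.Icc (0 : ℝ) 1, α ≠ 0 → L 0 < L α) ∧
    (B = 0 → ∀ α ∈ Set.Icc (0 : ℝ) 1, L α = L 0) := by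
  constructor
  · intro hBne
    have hRpos : (reynolds ρ Sg).PosDef := aux_reynolds_posDef ρ hρorth Sg hSg
    have hRSg : (Sg - B).PosDef := by rw [hB, sub_sub_cancel]; exact hRpos
    have hBH : B.IsHermitian := by
      rw [hB]
      exact hSg.1.sub hRpos.1
    obtain ⟨d, hdlt, hdne, hkey⟩ := aux_key Sg B hSg hBH hRSg
    obtain ⟨i₀, hi₀⟩ := hdne hBne
    have hpos : ∀ α ∈ Set.Icc (0:ℝ) 1, ∀ i, 0 < 1 - α * d i := by
      rintro α ⟨h0, h1⟩ i
      rcases le_or_gt (d i) 0 with h | h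
      · have : α * d i ≤ 0 := mul_nonpos_of_nonneg_of_nonpos h0 h
        linarith
      · have : α * d i ≤ d i := by nlinarith
        have := hdlt i
        linarith
    set F : ℝ → ℝ := fun α =>
      (1/2) * (Real.log Sg.det + ∑ i, (Real.log (1 - α * d i) + (1 - α * d i)⁻¹)) with hFdef
    have hEq : Set.EqOn L F (Set.Icc 0 1) := by
      intro α hα
      obtain ⟨hdet, htr⟩ := hkey α (fun i => (hpos α hα i).ne')
      have hprodpos : (0:ℝ) < ∏ i, (1 - α * d i) :=
        Finset.prod_pos (fun i _ => hpos α hα i)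
      rw [hL, hFdef]
      simp only
      rw [hdet, htr, Real.log_mul hSg.det_pos.ne' hprodpos.ne',
        Real.log_prod (fun i _ => (hpos α hα i).ne'), Finset.sum_add_distrib]
      ring
    have hder : ∀ x ∈ Set.Icc (0:ℝ) 1, HasDerivAt F
        ((1/2) * ∑ i, (-(d i) / (1 - x * d i) + (d i) / (1 - x * d i)^2)) x := by
      intro x hx
      have hterm : ∀ i : Fin M, HasDerivAt
          (fun α : ℝ => Real.log (1 - α * d i) + (1 - α * d i)⁻¹)
          (-(d i) / (1 - x * d i) + (d i) / (1 - x * d i)^2) x := by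
        intro i
        have h1 : HasDerivAt (fun α : ℝ => 1 - α * d i) (-(d i)) x :=
          (hasDerivAt_mul_const (d i)).const_sub 1
        have hne := (hpos x hx i).ne'
        have hlog := h1.log hne
        have hinv := h1.inv hne
        have : -(-(d i)) / (1 - x * d i)^2 = (d i) / (1 - x * d i)^2 := by ring_nf
        rw [this] at hinv
        exact hlog.add hinv
      have hsum := HasDerivAt.fun_sum (u := Finset.univ) (fun i _ => hterm i)
      exact ((hsum.const_add (Real.log Sg.det)).const_mul (1/2))
    have hFmono : StrictMonoOn F (Set.Icc 0 1) := by
      apply strictMonoOn_of_deriv_pos (convex_Icc 0 1)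
      · exact fun x hx => ((hder x hx).continuousAt).continuousWithinAt
      · intro x hx
        rw [interior_Icc] at hx
        have hx' : x ∈ Set.Icc (0:ℝ) 1 := ⟨hx.1.le, hx.2.le⟩
        rw [(hder x hx').deriv]
        have hts : ∀ i : Fin M, -(d i) / (1 - x * d i) + (d i) / (1 - x * d i)^2
            = x * (d i)^2 / (1 - x * d i)^2 := by
          intro i
          have hu := (hpos x hx' i).ne'
          field_simp
          ring
        have hnn : ∀ i ∈ Finset.univ, (0:ℝ) ≤ -(d i) / (1 - x * d i) + (d i) / (1 - x * d i)^2 := by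
          intro i _
          rw [hts i]
          have := hpos x hx' i
          have hx0 := hx.1
          positivity
        have hpos0 : (0:ℝ) < -(d i₀) / (1 - x * d i₀) + (d i₀) / (1 - x * d i₀)^2 := by
          rw [hts i₀]
          have := hpos x hx' i₀
          have hx0 := hx.1
          have hd2 : 0 < (d i₀)^2 := pow_pos (abs_pos.mpr hi₀) 2 |>.trans_le (by rw [sq_abs])
          positivity
        have hsumpos : (0:ℝ) < ∑ i, (-(d i) / (1 - x * d i) + (d i) / (1 - x * d i)^2) :=
          Finset.sum_pos' hnn ⟨i₀, Finset.mem_univ i₀, hpos0⟩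
        positivity
    have hLmono : StrictMonoOn L (Set.Icc 0 1) := by
      intro a ha b hb hab
      rw [hEq ha, hEq hb]
      exact hFmono ha hb hab
    refine ⟨hLmono.mono Set.Ioc_subset_Icc_self, fun α hα hne => ?_⟩
    have h0mem : (0:ℝ) ∈ Set.Icc (0:ℝ) 1 := ⟨le_refl 0, zero_le_one⟩
    exact hLmono h0mem hα (lt_of_le_of_ne hα.1 (Ne.symm hne))
  · intro h0 α _
    rw [hL, h0]
    simp


end
end
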